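/- arXiv:1805.01221 — 2 statements merged into one kernel-verified Lean document; each statement's English description precedes it below -/
import Mathlib

section
/- Let c(x, P) be a diversity-favouring measure on {0,1}ⁿ \ {0ⁿ, 1ⁿ} for OneMinMax or LOTZ, and assume the population P is a subset of the Pareto set that does not cover the whole Pareto front. Sort P by non-increasing values of c(·, P) and consider a parent-selection mechanism that selects the i-th element of the sorted sequence with probability r_i. Then among the top three ranked elements of P there is at least one good individual, and hence the probability of selecting a good individual is at least min{r₁, r₂, r₃}. -/
noncomputable section
open scoped ENNReal
attribute [local instance] Classical.propDecidable

namespace EMO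


/-- A bit string of length `n`. -/
abbrev BitString (n : ℕ) := Fin n → Bool

/-- Number of one-bits. -/
def onesCount {n : ℕ} (x : BitString n) : ℕ :=
  (Finset.univ.filter fun i => x i = true).card

def allOnes (n : ℕ) : BitString n := fun _ => true
def allZeros (n : ℕ) : BitString n := fun _ => false

/-- The bi-objective function OneMinMax. -/
def OneMinMax {n : ℕ} (x : BitString n) : ℤ × ℤ :=
  ((onesCount x : ℤ), (n : ℤ) - (onesCount x : ℤ))

/-- Number of leading ones. -/
def leadingOnes {n : ℕ} (x : BitString n) : ℕ :=
  (Finset.univ.filter fun i : Fin n => ∀ j : Fin n, j ≤ i → x j = true).card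

/-- Number of trailing zeros. -/
def trailingZeros {n : ℕ} (x : BitString n) : ℕ :=
  (Finset.univ.filter fun i : Fin n => ∀ j : Fin n, i ≤ j → x j = false).card

/-- The bi-objective function LOTZ. -/
def LOTZ {n : ℕ} (x : BitString n) : ℤ × ℤ :=
  ((leadingOnes x : ℤ), (trailingZeros x : ℤ))

/-- `y` dominates `x` (maximisation). -/
def dominates {n : ℕ} (f : BitString n → ℤ × ℤ) (y x : BitString n) : Prop :=
  (f x).1 ≤ (f y).1 ∧ (f x).2 ≤ (f y).2 ∧ f x ≠ f y

/-- `y` weakly dominates `x` (maximisation). -/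
def weaklyDominates {n : ℕ} (f : BitString n → ℤ × ℤ) (y x : BitString n) : Prop :=
  (f x).1 ≤ (f y).1 ∧ (f x).2 ≤ (f y).2

/-- Pareto optimality. -/
def paretoOptimal {n : ℕ} (f : BitString n → ℤ × ℤ) (x : BitString n) : Prop :=
  ¬ ∃ y : BitString n, dominates f y x

/-- A population of mutually non-dominated points. -/
def mutuallyNonDominated {n : ℕ} (f : BitString n → ℤ × ℤ)
    (P : Finset (BitString n)) : Prop :=
  ∀ x ∈ P, ∀ y ∈ P, ¬ dominates f y x

/-- Flip bit `i` of `x`. -/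
def flipBit {n : ℕ} (x : BitString n) (i : Fin n) : BitString n :=
  Function.update x i (!x i)

/-- `y` is a Hamming neighbour of `x`. -/
def hammingNeighbour {n : ℕ} (x y : BitString n) : Prop :=
  ∃ i : Fin n, y = flipBit x i

/-- `x` is good relative to population `P`: it is Pareto optimal and has a Pareto-optimal
Hamming neighbour whose objective vector is not attained by any member of `P`. -/
def isGood {n : ℕ} (f : BitString n → ℤ × ℤ) (P : Finset (BitString n))
    (x : BitString n) : Prop :=
  paretoOptimal f x ∧
    ∃ y : BitString n, hammingNeighbour x y ∧ paretoOptimal f y ∧ ∀ z ∈ P, f z ≠ f y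

/-- `x` is bad relative to population `P`. -/
def isBad {n : ℕ} (f : BitString n → ℤ × ℤ) (P : Finset (BitString n))
    (x : BitString n) : Prop :=
  paretoOptimal f x ∧
    ¬ ∃ y : BitString n, hammingNeighbour x y ∧ paretoOptimal f y ∧ ∀ z ∈ P, f z ≠ f y

/-- `P` covers the whole Pareto front of `f`. -/
def coversFront {n : ℕ} (f : BitString n → ℤ × ℤ) (P : Finset (BitString n)) : Prop :=
  ∀ x : BitString n, paretoOptimal f x → ∃ z ∈ P, f z = f x

/-- The hypervolume contribution of `x` to `P` (for a population of mutually
non-dominated points, with reference point `r`). -/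
def HVC {n : ℕ} (f : BitString n → ℤ × ℤ) (r : ℤ × ℤ) (x : BitString n)
    (P : Finset (BitString n)) : ℤ :=
  ((f x).1 - (WithBot.unbotD r.1 ((P.filter fun z => (f z).1 < (f x).1).image fun z => (f z).1).max)) *
  ((f x).2 - (WithBot.unbotD r.2 ((P.filter fun z => (f z).2 < (f x).2).image fun z => (f z).2).max))

/-- Crowding distance of `x` in `P` with respect to a single objective `g`: infinite for the
boundary points, and otherwise the normalised difference between successor and predecessor. -/
def CDCobj {n : ℕ} (g : BitString n → ℤ) (x : BitString n)
    (P : Finset (BitString n)) : ℝ≥0∞ :=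
  if (∀ z ∈ P, g x ≤ g z) ∨ (∀ z ∈ P, g z ≤ g x) then ⊤
  else
    (((WithTop.untopD 0 ((P.filter fun z => g x < g z).image g).min -
        (WithBot.unbotD 0 ((P.filter fun z => g z < g x).image g).max)).toNat : ℝ≥0∞)) /
      (((WithBot.unbotD 0 (P.image g).max - (WithTop.untopD 0 (P.image g).min)).toNat : ℝ≥0∞))

/-- The crowding distance contribution of `x` to `P`. -/
def CDC {n : ℕ} (f : BitString n → ℤ × ℤ) (x : BitString n)
    (P : Finset (BitString n)) : ℝ≥0∞ :=
  CDCobj (fun z => (f z).1) x P + CDCobj (fun z => (f z).2) x P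

/-- A diversity measure `c` is diversity-favouring on `S`. -/
def diversityFavouring {n : ℕ} {α : Type*} [Preorder α] (f : BitString n → ℤ × ℤ)
    (c : BitString n → Finset (BitString n) → α) (S : Set (BitString n)) : Prop :=
  ∀ P : Finset (BitString n), mutuallyNonDominated f P →
    ∀ x ∈ P, ∀ y ∈ P, x ∈ S → y ∈ S → isBad f P x → isGood f P y → c x P < c y P

/-- The default bit string (used only to make selection kernels total). -/
def defaultBS (n : ℕ) : BitString n := fun _ => false

/-- Local mutation: flip a single uniformly random bit. -/
def localMutation {n : ℕ} (hn : 0 < n) (x : BitString n) : PMF (BitString n) :=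
  haveI : Nonempty (Fin n) := ⟨⟨0, hn⟩⟩
  (PMF.uniformOfFintype (Fin n)).map (flipBit x)

/-- A Bernoulli coin with success probability `1/n` (for `n ≥ 1`). -/
def bitFlipCoin (n : ℕ) : PMF Bool :=
  PMF.ofFintype (fun b => cond b (min ((n : ℝ≥0∞))⁻¹ 1) (1 - min ((n : ℝ≥0∞))⁻¹ 1))
    (by rw [Fintype.sum_bool]; exact add_tsub_cancel_of_le (min_le_right _ _))

/-- Global (standard bit) mutation: flip each bit independently with probability `1/n`. -/
def globalMutationAux {n : ℕ} : List (Fin n) → BitString n → PMF (BitString n)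
  | [], x => PMF.pure x
  | i :: is, x => (bitFlipCoin n).bind fun b =>
      globalMutationAux is (if b then flipBit x i else x)

def globalMutation {n : ℕ} (x : BitString n) : PMF (BitString n) :=
  globalMutationAux (List.finRange n) x

/-- Survival selection: if `s'` is not dominated by any member of `P`, add `s'` to `P` and
remove all members weakly dominated by `s'`. -/
def updatePop {n : ℕ} (f : BitString n → ℤ × ℤ) (P : Finset (BitString n))
    (s' : BitString n) : Finset (BitString n) :=
  if ∃ z ∈ P, dominates f z s' then P
  else insert s' (P.filter fun z => ¬ weaklyDominates f s' z)

/-- One iteration of (G)SEMO with parent-selection kernel `select` and mutation `mutate`. -/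
def step {n : ℕ} (f : BitString n → ℤ × ℤ)
    (select : Finset (BitString n) → PMF (BitString n))
    (mutate : BitString n → PMF (BitString n))
    (P : Finset (BitString n)) : PMF (Finset (BitString n)) :=
  (select P).bind fun s => (mutate s).map fun s' => updatePop f P s'

/-- The L-dominant attribute `L(x) = LO(x) + TZ(x)`. -/
def Ldom {n : ℕ} (x : BitString n) : ℕ := leadingOnes x + trailingZeros x

/-- The subpopulation of points with maximum L-dominant attribute. -/
def maxLSub {n : ℕ} (P : Finset (BitString n)) : Finset (BitString n) :=
  P.filter fun x => ∀ z ∈ P, Ldom z ≤ Ldom x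

/-- One iteration of the modified GSEMO: parent selection (and the diversity contribution)
is restricted to the subpopulation of points with maximum L-dominant attribute. -/
def stepMod {n : ℕ} (f : BitString n → ℤ × ℤ)
    (select : Finset (BitString n) → PMF (BitString n))
    (mutate : BitString n → PMF (BitString n))
    (P : Finset (BitString n)) : PMF (Finset (BitString n)) :=
  (select (maxLSub P)).bind fun s => (mutate s).map fun s' => updatePop f P s'

/-- Initial population: a single uniformly random bit string. -/
def initDist (n : ℕ) : PMF (Finset (BitString n)) :=
  (PMF.uniformOfFintype (BitString n)).map fun x => {x}

/-- Distribution of the population after `t` iterations. -/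
def stateDist {S : Type*} (init : PMF S) (st : S → PMF S) : ℕ → PMF S
  | 0 => init
  | t + 1 => (stateDist init st t).bind st

/-- Expected number of iterations until an (absorbing) goal predicate is reached,
expressed as `∑ₜ Pr[goal not yet reached at time t]`. -/
def expectedRuntime {S : Type*} (init : PMF S) (st : S → PMF S) (goal : S → Prop) : ℝ≥0∞ :=
  ∑' t : ℕ, (stateDist init st t).toOuterMeasure {s | ¬ goal s}

/-- Uniform parent selection. -/
def uniformSelect {n : ℕ} (P : Finset (BitString n)) : PMF (BitString n) :=
  if h : P.Nonempty then PMF.uniformOfFinset P h else PMF.pure (defaultBS n)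

/-- Highest Diversity Contribution (HDC) parent selection: select an individual with
maximum diversity contribution, ties broken uniformly at random. -/
def HDCSelect {n : ℕ} {α : Type*} [LinearOrder α]
    (c : BitString n → Finset (BitString n) → α)
    (P : Finset (BitString n)) : PMF (BitString n) :=
  if h : P.Nonempty then
    PMF.uniformOfFinset (P.filter fun x => ∀ y ∈ P, c y P ≤ c x P)
      (by
        obtain ⟨b, hb, hmax⟩ := P.exists_max_image (fun x => c x P) h
        exact ⟨b, Finset.mem_filter.mpr ⟨hb, hmax⟩⟩)
  else PMF.pure (defaultBS n)

/-- Non-Minimum Uniform at Random (NMUAR) parent selection: select uniformly at random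
among all individuals whose diversity contribution is not minimal (from the whole
population if all contributions are equal). -/
def NMUARSelect {n : ℕ} {α : Type*} [LinearOrder α]
    (c : BitString n → Finset (BitString n) → α)
    (P : Finset (BitString n)) : PMF (BitString n) :=
  if h : P.Nonempty then
    if hQ : (P.filter fun x => ∃ y ∈ P, c y P < c x P).Nonempty then
      PMF.uniformOfFinset _ hQ
    else PMF.uniformOfFinset P h
  else PMF.pure (defaultBS n)

/-- Tournament selection with tournament size `μ = |P|`: draw `μ` individuals uniformly at
random with replacement from `P` and select one with the highest diversity contribution
among the drawn multiset (ties broken uniformly at random). -/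
def tournamentSelect {n : ℕ} {α : Type*} [LinearOrder α]
    (c : BitString n → Finset (BitString n) → α)
    (P : Finset (BitString n)) : PMF (BitString n) :=
  if h : P.Nonempty then
    haveI : Nonempty {x // x ∈ P} := h.to_subtype
    (PMF.uniformOfFintype (Fin P.card → {x // x ∈ P})).bind fun g =>
      PMF.uniformOfFinset
        ((Finset.univ.image fun i => ((g i : {x // x ∈ P}) : BitString n)).filter fun x =>
          ∀ y ∈ Finset.univ.image fun i => ((g i : {x // x ∈ P}) : BitString n), c y P ≤ c x P)
        (by
          have hne : (Finset.univ.image fun i => ((g i : {x // x ∈ P}) : BitString n)).Nonempty := by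
            refine ⟨(g ⟨0, Finset.card_pos.mpr h⟩ : {x // x ∈ P}), ?_⟩
            exact Finset.mem_image.mpr ⟨⟨0, Finset.card_pos.mpr h⟩, Finset.mem_univ _, rfl⟩
          obtain ⟨b, hb, hmax⟩ :=
            Finset.exists_max_image _ (fun x => c x P) hne
          exact ⟨b, Finset.mem_filter.mpr ⟨hb, hmax⟩⟩)
  else PMF.pure (defaultBS n)

/-- Exponential ranking scheme: probability of selecting the `i`-th ranked individual
(1-indexed) in a population of size `μ`. -/
def rExp (i μ : ℕ) : ℝ≥0∞ :=
  (2 : ℝ≥0∞)⁻¹ ^ i / ∑ j ∈ Finset.Icc 1 μ, (2 : ℝ≥0∞)⁻¹ ^ j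

/-- Power-law ranking scheme. -/
def rPow (i μ : ℕ) : ℝ≥0∞ :=
  ((i : ℝ≥0∞) ^ 2)⁻¹ / ∑ j ∈ Finset.Icc 1 μ, ((j : ℝ≥0∞) ^ 2)⁻¹

/-- Harmonic ranking scheme. -/
def rHarm (i μ : ℕ) : ℝ≥0∞ :=
  (i : ℝ≥0∞)⁻¹ / ∑ j ∈ Finset.Icc 1 μ, (j : ℝ≥0∞)⁻¹


/-- `select` implements a rank-based parent-selection scheme with rank probabilities
`r i μ` (1-indexed rank `i`, population size `μ`) with respect to the diversity
contribution `c`, for some non-increasing ordering of the population by `c`. -/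
def implementsRankScheme {n : ℕ} {α : Type*} [Preorder α]
    (c : BitString n → Finset (BitString n) → α) (r : ℕ → ℕ → ℝ≥0∞)
    (select : Finset (BitString n) → PMF (BitString n)) : Prop :=
  ∀ P : Finset (BitString n), P.Nonempty →
    ∃ l : List (BitString n), l.Nodup ∧ l.toFinset = P ∧
      l.Chain' (fun a b => c b P ≤ c a P) ∧
      (∀ i : Fin l.length, select P (l.get i) = r (i.val + 1) P.card) ∧
      (∀ x : BitString n, x ∉ P → select P x = 0)

/-- The Pareto-optimal point `1^i 0^(n-i)` of LOTZ. -/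
def opt (n i : ℕ) : BitString n := fun t => decide ((t : ℕ) < i)

/-- The whole Pareto set of LOTZ as a population. -/
def frontSet (n : ℕ) : Finset (BitString n) := (Finset.range (n + 1)).image (opt n)

/-- `P` has a gap at position `i`. -/
def hasGapAt {n : ℕ} (P : Finset (BitString n)) (i : ℕ) : Prop :=
  opt n i ∉ P ∧ (∃ j, j < i ∧ opt n j ∈ P) ∧ (∃ k, i < k ∧ k ≤ n ∧ opt n k ∈ P)

/-- `P` has a gap at some position `i` with `n/4 ≤ i ≤ 3n/4`. -/
def gapInRange (n : ℕ) (P : Finset (BitString n)) : Prop :=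
  ∃ i : ℕ, n ≤ 4 * i ∧ 4 * i ≤ 3 * n ∧ hasGapAt P i

/-- `P` contains both `0^n` and `1^n`. -/
def bothExtremes (n : ℕ) (P : Finset (BitString n)) : Prop :=
  allZeros n ∈ P ∧ allOnes n ∈ P

/-- The chain stopped (frozen) as soon as `cond` holds. -/
def stopWhen {S : Type*} (cond : S → Prop) (st : S → PMF S) (s : S) : PMF S :=
  if cond s then PMF.pure s else st s


/-! ### Auxiliary lemmas -/

section Aux

variable {n : ℕ}

lemma downclosed_mem_iff {A : Finset (Fin n)} (h : ∀ i ∈ A, ∀ j, j ≤ i → j ∈ A) (i : Fin n) :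
    i ∈ A ↔ (i : ℕ) < A.card := by
  constructor
  · intro hi
    have hs : Finset.Iic i ⊆ A := fun j hj => h i hi j (Finset.mem_Iic.mp hj)
    have := Finset.card_le_card hs
    rw [Fin.card_Iic] at this; omega
  · intro hi
    by_contra hni
    have hs : A ⊆ Finset.Iio i := by
      intro j hj
      rw [Finset.mem_Iio]
      rcases lt_or_ge j i with h' | h'
      · exact h'
      · exact absurd (h j hj i h') hni
    have := Finset.card_le_card hs
    rw [Fin.card_Iio] at this; omega

lemma upclosed_mem_iff {A : Finset (Fin n)} (h : ∀ i ∈ A, ∀ j, i ≤ j → j ∈ A) (i : Fin n) :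
    i ∈ A ↔ n - A.card ≤ (i : ℕ) := by
  have hA : A.card ≤ n := by
    simpa using Finset.card_le_card (Finset.subset_univ A)
  have hin : (i : ℕ) < n := i.isLt
  constructor
  · intro hi
    have hs : Finset.Ici i ⊆ A := fun j hj => h i hi j (Finset.mem_Ici.mp hj)
    have := Finset.card_le_card hs
    rw [Fin.card_Ici] at this; omega
  · intro hi
    by_contra hni
    have hs : A ⊆ Finset.Ioi i := by
      intro j hj
      rw [Finset.mem_Ioi]
      rcases lt_or_ge i j with h' | h'
      · exact h'
      · exact absurd (h j hj i h') hni
    have := Finset.card_le_card hs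
    rw [Fin.card_Ioi] at this; omega

lemma card_filter_val_lt (k : ℕ) (hk : k ≤ n) :
    (Finset.univ.filter fun i : Fin n => (i : ℕ) < k).card = k := by
  rcases Nat.lt_or_ge k n with h | h
  · have he : (Finset.univ.filter fun i : Fin n => (i : ℕ) < k) = Finset.Iio ⟨k, h⟩ := by
      ext j; simp [Fin.lt_def]
    rw [he, Fin.card_Iio]
  · have hkn : k = n := le_antisymm hk h
    have he : (Finset.univ.filter fun i : Fin n => (i : ℕ) < k) = Finset.univ := by
      ext j; simp [Nat.lt_of_lt_of_le j.isLt h]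
    rw [he]; simp [hkn]

/-! #### onesCount lemmas -/

lemma onesCount_le (x : BitString n) : onesCount x ≤ n := by
  unfold onesCount
  simpa using Finset.card_filter_le Finset.univ (fun i => x i = true)

lemma onesCount_eq_zero_iff (x : BitString n) : onesCount x = 0 ↔ x = allZeros n := by
  unfold onesCount
  rw [Finset.card_eq_zero, Finset.filter_eq_empty_iff]
  constructor
  · intro h; funext t
    have := h (Finset.mem_univ t)
    simpa [allZeros] using this
  · intro h t _
    simp [h, allZeros]

lemma onesCount_eq_n_iff (x : BitString n) : onesCount x = n ↔ x = allOnes n := by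
  unfold onesCount
  constructor
  · intro h
    have : (Finset.univ.filter fun i => x i = true) = Finset.univ := by
      apply Finset.eq_univ_of_card
      simpa using h
    funext t
    have := Finset.mem_filter.mp (this ▸ Finset.mem_univ t)
    simpa [allOnes] using this.2
  · intro h
    have : (Finset.univ.filter fun i => x i = true) = Finset.univ := by
      ext t; simp [h, allOnes]
    simp [this]

lemma onesCount_flip_true {x : BitString n} {i : Fin n} (h : x i = true) :
    onesCount (flipBit x i) = onesCount x - 1 := by
  unfold onesCount
  have he : (Finset.univ.filter fun j => flipBit x i j = true)
      = (Finset.univ.filter fun j => x j = true).erase i := by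
    ext j
    by_cases hj : j = i
    · subst hj; simp [flipBit, h]
    · rw [Finset.mem_filter]
      simp [Finset.mem_filter, flipBit, Function.update_of_ne hj, hj]
  rw [he, Finset.card_erase_of_mem (by simp [h])]

lemma onesCount_flip_false {x : BitString n} {i : Fin n} (h : x i = false) :
    onesCount (flipBit x i) = onesCount x + 1 := by
  unfold onesCount
  have he : (Finset.univ.filter fun j => flipBit x i j = true)
      = insert i (Finset.univ.filter fun j => x j = true) := by
    ext j
    by_cases hj : j = i
    · subst hj; simp [flipBit, h]
    · rw [Finset.mem_filter]
      simp [Finset.mem_filter, flipBit, Function.update_of_ne hj, hj]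
  rw [he, Finset.card_insert_of_notMem (by simp [h])]

lemma onesCount_opt {k : ℕ} (hk : k ≤ n) : onesCount (opt n k) = k := by
  unfold onesCount opt
  have he : (Finset.univ.filter fun i : Fin n => decide ((i : ℕ) < k) = true)
      = Finset.univ.filter fun i : Fin n => (i : ℕ) < k := by
    ext j; simp
  rw [he, card_filter_val_lt k hk]

lemma pareto_OMM (x : BitString n) : paretoOptimal OneMinMax x := by
  rintro ⟨y, h1, h2, h3⟩
  simp only [OneMinMax] at h1 h2 h3
  apply h3
  have : onesCount x = onesCount y := by omega
  rw [this]

/-! #### leadingOnes / trailingZeros lemmas -/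

lemma leadingOnes_le (x : BitString n) : leadingOnes x ≤ n := by
  unfold leadingOnes
  simpa using Finset.card_filter_le Finset.univ (fun i : Fin n => ∀ j : Fin n, j ≤ i → x j = true)

lemma mem_LO_iff (x : BitString n) (i : Fin n) :
    (∀ j : Fin n, j ≤ i → x j = true) ↔ (i : ℕ) < leadingOnes x := by
  have h := downclosed_mem_iff (A := Finset.univ.filter fun i : Fin n => ∀ j : Fin n, j ≤ i → x j = true)
    (by
      intro a ha b hb
      simp only [Finset.mem_filter, Finset.mem_univ, true_and] at ha ⊢
      exact fun j hj => ha j (le_trans hj hb)) i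
  simp only [Finset.mem_filter, Finset.mem_univ, true_and] at h
  exact h.trans (by rfl)

lemma mem_TZ_iff (x : BitString n) (i : Fin n) :
    (∀ j : Fin n, i ≤ j → x j = false) ↔ n - trailingZeros x ≤ (i : ℕ) := by
  have h := upclosed_mem_iff (A := Finset.univ.filter fun i : Fin n => ∀ j : Fin n, i ≤ j → x j = false)
    (by
      intro a ha b hb
      simp only [Finset.mem_filter, Finset.mem_univ, true_and] at ha ⊢
      exact fun j hj => ha j (le_trans hb hj)) i
  simp only [Finset.mem_filter, Finset.mem_univ, true_and] at h
  exact h.trans (by rfl)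

lemma x_true_of_lt_LO {x : BitString n} {i : Fin n} (h : (i : ℕ) < leadingOnes x) :
    x i = true :=
  ((mem_LO_iff x i).mpr h) i le_rfl

lemma x_false_of_TZ {x : BitString n} {i : Fin n} (h : n - trailingZeros x ≤ (i : ℕ)) :
    x i = false :=
  ((mem_TZ_iff x i).mpr h) i le_rfl

lemma LO_add_TZ_le (x : BitString n) : leadingOnes x + trailingZeros x ≤ n := by
  unfold leadingOnes trailingZeros
  have hd : Disjoint (Finset.univ.filter fun i : Fin n => ∀ j : Fin n, j ≤ i → x j = true)
      (Finset.univ.filter fun i : Fin n => ∀ j : Fin n, i ≤ j → x j = false) := by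
    rw [Finset.disjoint_left]
    intro a ha hb
    simp only [Finset.mem_filter, Finset.mem_univ, true_and] at ha hb
    have h1 := ha a le_rfl
    have h2 := hb a le_rfl
    rw [h1] at h2; exact Bool.noConfusion h2
  have := Finset.card_union_of_disjoint hd
  have hle : ((Finset.univ.filter fun i : Fin n => ∀ j : Fin n, j ≤ i → x j = true) ∪
      (Finset.univ.filter fun i : Fin n => ∀ j : Fin n, i ≤ j → x j = false)).card ≤ n := by
    have := Finset.card_le_card (Finset.subset_univ
      ((Finset.univ.filter fun i : Fin n => ∀ j : Fin n, j ≤ i → x j = true) ∪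
      (Finset.univ.filter fun i : Fin n => ∀ j : Fin n, i ≤ j → x j = false)))
    simpa using this
  omega

lemma eq_opt_of_LO_add_TZ {x : BitString n} (h : leadingOnes x + trailingZeros x = n) :
    x = opt n (leadingOnes x) := by
  funext t
  unfold opt
  by_cases ht : (t : ℕ) < leadingOnes x
  · rw [x_true_of_lt_LO ht, decide_eq_true ht]
  · have harg : n - trailingZeros x ≤ (t : ℕ) := by omega
    rw [x_false_of_TZ harg, decide_eq_false ht]

lemma LO_opt {k : ℕ} (hk : k ≤ n) : leadingOnes (opt n k) = k := by
  unfold leadingOnes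
  have he : (Finset.univ.filter fun i : Fin n => ∀ j : Fin n, j ≤ i → opt n k j = true)
      = Finset.univ.filter fun i : Fin n => (i : ℕ) < k := by
    ext i
    simp only [Finset.mem_filter, Finset.mem_univ, true_and, opt, decide_eq_true_eq]
    constructor
    · intro h; exact h i le_rfl
    · intro h j hj; omega
  rw [he, card_filter_val_lt k hk]

lemma TZ_opt {k : ℕ} (hk : k ≤ n) : trailingZeros (opt n k) = n - k := by
  unfold trailingZeros
  have he : (Finset.univ.filter fun i : Fin n => ∀ j : Fin n, i ≤ j → opt n k j = false)
      = Finset.univ.filter fun i : Fin n => ¬ ((i : ℕ) < k) := by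
    ext i
    simp only [Finset.mem_filter, Finset.mem_univ, true_and, opt, decide_eq_false_iff_not]
    constructor
    · intro h; exact h i le_rfl
    · intro h j hj; omega
  rw [he]
  have h2 := Finset.card_filter_add_card_filter_not
    (s := (Finset.univ : Finset (Fin n))) (p := fun i : Fin n => (i : ℕ) < k)
  rw [card_filter_val_lt k hk] at h2
  have : (Finset.univ : Finset (Fin n)).card = n := by simp
  omega

lemma LOTZ_opt {k : ℕ} (hk : k ≤ n) : LOTZ (opt n k) = ((k : ℤ), (n : ℤ) - k) := by
  unfold LOTZ
  rw [LO_opt hk, TZ_opt hk]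
  have : ((n - k : ℕ) : ℤ) = (n : ℤ) - k := by omega
  rw [this]

lemma pareto_opt {k : ℕ} (hk : k ≤ n) : paretoOptimal LOTZ (opt n k) := by
  rintro ⟨y, h1, h2, h3⟩
  rw [LOTZ_opt hk] at h1 h2 h3
  simp only [LOTZ] at h1 h2 h3
  have hy := LO_add_TZ_le y
  have e1 : leadingOnes y = k := by omega
  have e2 : trailingZeros y = n - k := by omega
  apply h3
  simp only [LOTZ, e1, e2]
  have : ((n - k : ℕ) : ℤ) = (n : ℤ) - k := by omega
  rw [this]

lemma pareto_LOTZ_char {x : BitString n} (h : paretoOptimal LOTZ x) :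
    x = opt n (leadingOnes x) := by
  rcases lt_or_eq_of_le (LO_add_TZ_le x) with hlt | heq
  · exfalso
    apply h
    refine ⟨opt n (leadingOnes x), ?_, ?_, ?_⟩
    · rw [LOTZ_opt (by omega)]
      simp [LOTZ]
    · rw [LOTZ_opt (by omega)]
      simp only [LOTZ]
      omega
    · rw [LOTZ_opt (by omega)]
      intro hpe
      simp only [LOTZ, Prod.mk.injEq] at hpe
      omega
  · exact eq_opt_of_LO_add_TZ heq


lemma opt_zero : opt n 0 = allZeros n := by
  funext t; simp [opt, allZeros]

lemma opt_top : opt n n = allOnes n := by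
  funext t; simp [opt, allOnes, t.isLt]

lemma flip_opt_down {a : ℕ} (h1 : 1 ≤ a) (h2 : a ≤ n) :
    flipBit (opt n a) ⟨a - 1, by omega⟩ = opt n (a - 1) := by
  funext t
  simp only [flipBit, Function.update_apply, opt]
  by_cases ht : t = (⟨a - 1, by omega⟩ : Fin n)
  · rw [if_pos ht, ht]
    rw [decide_eq_true (show ((⟨a - 1, by omega⟩ : Fin n) : ℕ) < a by simp; omega)]
    rw [decide_eq_false (show ¬(((⟨a - 1, by omega⟩ : Fin n) : ℕ) < a - 1) by simp)]
    rfl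
  · rw [if_neg ht]
    have hne : (t : ℕ) ≠ a - 1 := fun h => ht (Fin.ext (by simpa using h))
    exact decide_eq_decide.mpr (by omega)

lemma flip_opt_up {a : ℕ} (h2 : a < n) :
    flipBit (opt n a) ⟨a, h2⟩ = opt n (a + 1) := by
  funext t
  simp only [flipBit, Function.update_apply, opt]
  by_cases ht : t = (⟨a, h2⟩ : Fin n)
  · rw [if_pos ht, ht]
    rw [decide_eq_false (show ¬(((⟨a, h2⟩ : Fin n) : ℕ) < a) by simp)]
    rw [decide_eq_true (show ((⟨a, h2⟩ : Fin n) : ℕ) < a + 1 by simp)]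
    rfl
  · rw [if_neg ht]
    have hne : (t : ℕ) ≠ a := fun h => ht (Fin.ext (by simpa using h))
    exact decide_eq_decide.mpr (by omega)

/-! #### abstract good-existence lemma -/

lemma exists_good (f : BitString n → ℤ × ℤ) (lev : BitString n → ℕ)
    (P : Finset (BitString n)) (hPne : P.Nonempty)
    (hpar : ∀ x ∈ P, paretoOptimal f x)
    (hlev : ∀ x ∈ P, lev x ≤ n)
    (hval : ∀ x ∈ P, ∀ w : BitString n, paretoOptimal f w → (f x = f w ↔ lev x = lev w))
    (hmiss : ∃ k ≤ n, ∀ z ∈ P, lev z ≠ k)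
    (hdown : ∀ x ∈ P, 1 ≤ lev x →
      ∃ y, hammingNeighbour x y ∧ paretoOptimal f y ∧ lev y = lev x - 1)
    (hup : ∀ x ∈ P, lev x < n →
      ∃ y, hammingNeighbour x y ∧ paretoOptimal f y ∧ lev y = lev x + 1)
    (hzero : ∀ x ∈ P, (lev x = 0 ↔ x = allZeros n))
    (hone : ∀ x ∈ P, (lev x = n ↔ x = allOnes n)) :
    ∃ y ∈ P, isGood f P y ∧
      ((∃ x ∈ P, x ≠ allZeros n ∧ x ≠ allOnes n) → (y ≠ allZeros n ∧ y ≠ allOnes n)) := by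
  obtain ⟨k, hkn, hkmiss⟩ := hmiss
  -- helper: goodness from a missing neighbouring level
  have good_down : ∀ x ∈ P, 1 ≤ lev x → (∀ z ∈ P, lev z ≠ lev x - 1) → isGood f P x := by
    intro x hx h1 hm
    obtain ⟨y, hnb, hpy, hly⟩ := hdown x hx h1
    refine ⟨hpar x hx, y, hnb, hpy, ?_⟩
    intro z hz hfz
    exact hm z hz (by rw [(hval z hz y hpy).mp hfz, hly])
  have good_up : ∀ x ∈ P, lev x < n → (∀ z ∈ P, lev z ≠ lev x + 1) → isGood f P x := by
    intro x hx h1 hm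
    obtain ⟨y, hnb, hpy, hly⟩ := hup x hx h1
    refine ⟨hpar x hx, y, hnb, hpy, ?_⟩
    intro z hz hfz
    exact hm z hz (by rw [(hval z hz y hpy).mp hfz, hly])
  by_cases hS : ∃ x ∈ P, x ≠ allZeros n ∧ x ≠ allOnes n
  · -- there is a non-extreme point; produce a non-extreme good point
    obtain ⟨x₀, hx₀, hx₀z, hx₀o⟩ := hS
    have hm0 : 0 < lev x₀ := by
      rcases Nat.eq_zero_or_pos (lev x₀) with h | h
      · exact absurd ((hzero x₀ hx₀).mp h) hx₀z
      · exact h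
    have hmn : lev x₀ < n := by
      rcases lt_or_eq_of_le (hlev x₀ hx₀) with h | h
      · exact h
      · exact absurd ((hone x₀ hx₀).mp h) hx₀o
    have hkne : k ≠ lev x₀ := fun h => hkmiss x₀ hx₀ h.symm
    rcases lt_or_gt_of_ne hkne with hklt | hkgt
    · -- k < lev x₀ : take the least level above k
      set T := (P.image lev).filter (fun v => k < v) with hT
      have hTne : T.Nonempty := ⟨lev x₀, by
        simp only [hT, Finset.mem_filter, Finset.mem_image]
        exact ⟨⟨x₀, hx₀, rfl⟩, hklt⟩⟩
      set m₀ := T.min' hTne with hm₀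
      have hm₀T : m₀ ∈ T := T.min'_mem hTne
      have hm₀k : k < m₀ := (Finset.mem_filter.mp hm₀T).2
      obtain ⟨x₁, hx₁, hlx₁⟩ := Finset.mem_image.mp (Finset.mem_filter.mp hm₀T).1
      have hm₀le : m₀ ≤ lev x₀ := T.min'_le _ (by
        simp only [hT, Finset.mem_filter, Finset.mem_image]
        exact ⟨⟨x₀, hx₀, rfl⟩, hklt⟩)
      have hmissm : ∀ z ∈ P, lev z ≠ m₀ - 1 := by
        intro z hz hez
        rcases Nat.lt_or_ge k (m₀ - 1) with h' | h'
        · have : m₀ - 1 ∈ T := by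
            simp only [hT, Finset.mem_filter, Finset.mem_image]
            exact ⟨⟨z, hz, hez⟩, h'⟩
          have := T.min'_le _ this
          omega
        · have : m₀ - 1 = k := by omega
          exact hkmiss z hz (by omega)
      refine ⟨x₁, hx₁, good_down x₁ hx₁ (by omega) (by rw [hlx₁]; exact hmissm), ?_⟩
      intro _
      constructor
      · intro h
        have := (hzero x₁ hx₁).mpr h
        omega
      · intro h
        have := (hone x₁ hx₁).mpr h
        omega
    · -- lev x₀ < k : take the greatest level below k
      set T := (P.image lev).filter (fun v => v < k) with hT
      have hTne : T.Nonempty := ⟨lev x₀, by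
        simp only [hT, Finset.mem_filter, Finset.mem_image]
        exact ⟨⟨x₀, hx₀, rfl⟩, hkgt⟩⟩
      set m₁ := T.max' hTne with hm₁
      have hm₁T : m₁ ∈ T := T.max'_mem hTne
      have hm₁k : m₁ < k := (Finset.mem_filter.mp hm₁T).2
      obtain ⟨x₁, hx₁, hlx₁⟩ := Finset.mem_image.mp (Finset.mem_filter.mp hm₁T).1
      have hm₁ge : lev x₀ ≤ m₁ := T.le_max' _ (by
        simp only [hT, Finset.mem_filter, Finset.mem_image]
        exact ⟨⟨x₀, hx₀, rfl⟩, hkgt⟩)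
      have hmissm : ∀ z ∈ P, lev z ≠ m₁ + 1 := by
        intro z hz hez
        rcases Nat.lt_or_ge (m₁ + 1) k with h' | h'
        · have : m₁ + 1 ∈ T := by
            simp only [hT, Finset.mem_filter, Finset.mem_image]
            exact ⟨⟨z, hz, hez⟩, h'⟩
          have := T.le_max' _ this
          omega
        · have : m₁ + 1 = k := by omega
          exact hkmiss z hz (by omega)
      refine ⟨x₁, hx₁, good_up x₁ hx₁ (by omega) (by rw [hlx₁]; exact hmissm), ?_⟩
      intro _
      constructor
      · intro h
        have := (hzero x₁ hx₁).mpr h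
        omega
      · intro h
        have := (hone x₁ hx₁).mpr h
        omega
  · -- no non-extreme point needed in the conclusion
    obtain ⟨x₀, hx₀⟩ := hPne
    have hkne : k ≠ lev x₀ := fun h => hkmiss x₀ hx₀ h.symm
    rcases lt_or_gt_of_ne hkne with hklt | hkgt
    · set T := (P.image lev).filter (fun v => k < v) with hT
      have hTne : T.Nonempty := ⟨lev x₀, by
        simp only [hT, Finset.mem_filter, Finset.mem_image]
        exact ⟨⟨x₀, hx₀, rfl⟩, hklt⟩⟩
      set m₀ := T.min' hTne with hm₀
      have hm₀T : m₀ ∈ T := T.min'_mem hTne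
      have hm₀k : k < m₀ := (Finset.mem_filter.mp hm₀T).2
      obtain ⟨x₁, hx₁, hlx₁⟩ := Finset.mem_image.mp (Finset.mem_filter.mp hm₀T).1
      have hmissm : ∀ z ∈ P, lev z ≠ m₀ - 1 := by
        intro z hz hez
        rcases Nat.lt_or_ge k (m₀ - 1) with h' | h'
        · have : m₀ - 1 ∈ T := by
            simp only [hT, Finset.mem_filter, Finset.mem_image]
            exact ⟨⟨z, hz, hez⟩, h'⟩
          have := T.min'_le _ this
          omega
        · have : m₀ - 1 = k := by omega
          exact hkmiss z hz (by omega)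
      exact ⟨x₁, hx₁, good_down x₁ hx₁ (by omega) (by rw [hlx₁]; exact hmissm),
        fun h => absurd h hS⟩
    · set T := (P.image lev).filter (fun v => v < k) with hT
      have hTne : T.Nonempty := ⟨lev x₀, by
        simp only [hT, Finset.mem_filter, Finset.mem_image]
        exact ⟨⟨x₀, hx₀, rfl⟩, hkgt⟩⟩
      set m₁ := T.max' hTne with hm₁
      have hm₁T : m₁ ∈ T := T.max'_mem hTne
      have hm₁k : m₁ < k := (Finset.mem_filter.mp hm₁T).2
      obtain ⟨x₁, hx₁, hlx₁⟩ := Finset.mem_image.mp (Finset.mem_filter.mp hm₁T).1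
      have hmissm : ∀ z ∈ P, lev z ≠ m₁ + 1 := by
        intro z hz hez
        rcases Nat.lt_or_ge (m₁ + 1) k with h' | h'
        · have : m₁ + 1 ∈ T := by
            simp only [hT, Finset.mem_filter, Finset.mem_image]
            exact ⟨⟨z, hz, hez⟩, h'⟩
          have := T.le_max' _ this
          omega
        · have : m₁ + 1 = k := by omega
          exact hkmiss z hz (by omega)
      have hlx₁n : lev x₁ < n := by
        rw [hlx₁]; omega
      exact ⟨x₁, hx₁, good_up x₁ hx₁ hlx₁n (by rw [hlx₁]; exact hmissm),
        fun h => absurd h hS⟩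

end Aux

/-- If `c` is diversity-favouring on `{0,1}ⁿ \ {0ⁿ,1ⁿ}` for OneMinMax or
LOTZ, the population `P` is a subset of the Pareto set not covering the whole front and
`l` sorts `P` by non-increasing `c`-values, then among the first three elements of `l`
there is a good individual, and any parent selection that selects the `i`-th ranked
individual with probability `ρ i` selects a good individual with probability at least
`min {ρ 0, ρ 1, ρ 2}` (ranks 0-indexed). -/
theorem good_in_top_three {n : ℕ} {α : Type*} [LinearOrder α]
    (f : BitString n → ℤ × ℤ) (hf : f = OneMinMax ∨ f = LOTZ)
    (c : BitString n → Finset (BitString n) → α)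
    (hc : diversityFavouring f c {z | z ≠ allZeros n ∧ z ≠ allOnes n})
    (P : Finset (BitString n)) (hPne : P.Nonempty)
    (hPpar : ∀ x ∈ P, paretoOptimal f x) (hnd : mutuallyNonDominated f P)
    (hncov : ¬ coversFront f P)
    (l : List (BitString n)) (hnodup : l.Nodup) (hlP : l.toFinset = P)
    (hsort : l.Chain' fun a b => c b P ≤ c a P)
    (select : PMF (BitString n)) (ρ : ℕ → ℝ≥0∞)
    (hsel : ∀ i : Fin l.length, select (l.get i) = ρ i.val) :
    (∃ i : Fin l.length, i.val < 3 ∧ isGood f P (l.get i)) ∧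
    min (ρ 0) (min (ρ 1) (ρ 2)) ≤ select.toOuterMeasure {x | isGood f P x} := by
  have hmain : ∃ i : Fin l.length, (i : ℕ) < 3 ∧ isGood f P (l.get i) := by
    have hgood : ∃ y ∈ P, isGood f P y ∧
        ((∃ x ∈ P, x ≠ allZeros n ∧ x ≠ allOnes n) → (y ≠ allZeros n ∧ y ≠ allOnes n)) := by
      rcases hf with hf | hf <;> subst hf
      · -- OneMinMax
        refine exists_good _ onesCount P hPne hPpar ?_ ?_ ?_ ?_ ?_ ?_ ?_
        · intro x _; exact onesCount_le x
        · intro x _ w _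
          simp only [OneMinMax, Prod.mk.injEq]
          constructor <;> intro h <;> omega
        · rw [coversFront] at hncov; push_neg at hncov
          obtain ⟨x, _, hx⟩ := hncov
          refine ⟨onesCount x, onesCount_le x, ?_⟩
          intro z hz he
          exact hx z hz (by simp only [OneMinMax, he])
        · intro x _ h1
          have hne : (Finset.univ.filter fun i => x i = true).Nonempty := by
            rw [← Finset.card_pos]; exact h1
          obtain ⟨i, hi⟩ := hne
          have hxi : x i = true := (Finset.mem_filter.mp hi).2
          exact ⟨flipBit x i, ⟨i, rfl⟩, pareto_OMM _, onesCount_flip_true hxi⟩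
        · intro x _ h1
          have hne : ∃ i, x i = false := by
            by_contra hno
            push_neg at hno
            have : x = allOnes n := by
              funext t
              cases hxt : x t with
              | false => exact absurd hxt (hno t)
              | true => simp [hxt, allOnes]
            rw [← onesCount_eq_n_iff] at this
            omega
          obtain ⟨i, hi⟩ := hne
          exact ⟨flipBit x i, ⟨i, rfl⟩, pareto_OMM _, onesCount_flip_false hi⟩
        · intro x _; exact onesCount_eq_zero_iff x
        · intro x _; exact onesCount_eq_n_iff x
      · -- LOTZ
        have hLOTZval : ∀ w : BitString n, paretoOptimal LOTZ w →
            LOTZ w = ((leadingOnes w : ℤ), (n : ℤ) - leadingOnes w) := by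
          intro w hw
          conv_lhs => rw [pareto_LOTZ_char hw]
          exact LOTZ_opt (leadingOnes_le w)
        refine exists_good _ leadingOnes P hPne hPpar ?_ ?_ ?_ ?_ ?_ ?_ ?_
        · intro x _; exact leadingOnes_le x
        · intro x hx w hw
          rw [hLOTZval x (hPpar x hx), hLOTZval w hw]
          simp only [Prod.mk.injEq]
          constructor <;> intro h <;> omega
        · rw [coversFront] at hncov; push_neg at hncov
          obtain ⟨x, hxpar, hx⟩ := hncov
          refine ⟨leadingOnes x, leadingOnes_le x, ?_⟩
          intro z hz he
          apply hx z hz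
          rw [hLOTZval z (hPpar z hz), hLOTZval x hxpar, he]
        · intro x hx h1
          have hch := pareto_LOTZ_char (hPpar x hx)
          have hle := leadingOnes_le x
          generalize hga : leadingOnes x = a at hch h1 hle
          subst hch
          refine ⟨opt n (a - 1), ⟨⟨a - 1, by omega⟩, (flip_opt_down h1 hle).symm⟩,
            pareto_opt (by omega), ?_⟩
          exact LO_opt (by omega)
        · intro x hx h1
          have hch := pareto_LOTZ_char (hPpar x hx)
          generalize hga : leadingOnes x = a at hch h1
          subst hch
          refine ⟨opt n (a + 1), ⟨⟨a, h1⟩, (flip_opt_up h1).symm⟩,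
            pareto_opt (by omega), ?_⟩
          exact LO_opt (by omega)
        · intro x hx
          constructor
          · intro h
            have hc := pareto_LOTZ_char (hPpar x hx)
            rw [h, opt_zero] at hc
            exact hc
          · intro h
            rw [h, ← opt_zero, LO_opt (Nat.zero_le n)]
        · intro x hx
          constructor
          · intro h
            have hc := pareto_LOTZ_char (hPpar x hx)
            rw [h, opt_top] at hc
            exact hc
          · intro h
            rw [h, ← opt_top, LO_opt le_rfl]
    obtain ⟨g, hgP, hggood, hgcond⟩ := hgood
    have hgl : g ∈ l := by rw [← List.mem_toFinset, hlP]; exact hgP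
    obtain ⟨j, hj⟩ := List.mem_iff_get.mp hgl
    by_contra hcon
    push_neg at hcon
    have hj3 : 3 ≤ (j : ℕ) := by
      by_contra h
      exact hcon j (by omega) (hj ▸ hggood)
    have hlen : 3 < l.length := lt_of_le_of_lt hj3 j.isLt
    have hmem : ∀ i : Fin l.length, l.get i ∈ P := fun i => by
      rw [← hlP, List.mem_toFinset]; exact l.get_mem i
    have hinj := List.nodup_iff_injective_get.mp hnodup
    have hex : ∃ i : Fin l.length, (i : ℕ) < 3 ∧
        l.get i ≠ allZeros n ∧ l.get i ≠ allOnes n := by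
      by_contra hno
      push_neg at hno
      have key : ∀ i : Fin l.length, (i : ℕ) < 3 →
          l.get i = allZeros n ∨ l.get i = allOnes n := by
        intro i hi
        by_cases hz : l.get i = allZeros n
        · exact Or.inl hz
        · exact Or.inr (hno i hi hz)
      have hne : ∀ (p q : Fin l.length), (p : ℕ) ≠ (q : ℕ) → l.get p ≠ l.get q :=
        fun p q hpq h => hpq (congrArg Fin.val (hinj h))
      rcases key ⟨0, by omega⟩ (by norm_num) with h0 | h0 <;>
        rcases key ⟨1, by omega⟩ (by norm_num) with h1 | h1 <;>
          rcases key ⟨2, by omega⟩ (by norm_num) with h2 | h2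
      all_goals first
        | exact hne ⟨0, by omega⟩ ⟨1, by omega⟩ (by norm_num) (h0.trans h1.symm)
        | exact hne ⟨0, by omega⟩ ⟨2, by omega⟩ (by norm_num) (h0.trans h2.symm)
        | exact hne ⟨1, by omega⟩ ⟨2, by omega⟩ (by norm_num) (h1.trans h2.symm)
    obtain ⟨istar, histar, hiz, hio⟩ := hex
    have hbad : isBad f P (l.get istar) := by
      refine ⟨hPpar _ (hmem istar), ?_⟩
      intro hE
      exact hcon istar histar ⟨hPpar _ (hmem istar), hE⟩
    have hgS : g ≠ allZeros n ∧ g ≠ allOnes n :=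
      hgcond ⟨l.get istar, hmem istar, hiz, hio⟩
    have hlt := hc P hnd (l.get istar) (hmem istar) g hgP ⟨hiz, hio⟩ hgS hbad hggood
    haveI : IsTrans (BitString n) (fun a b => c b P ≤ c a P) :=
      ⟨fun a b d h1 h2 => le_trans h2 h1⟩
    have hpw := List.isChain_iff_pairwise.mp hsort
    have hge := List.pairwise_iff_get.mp hpw istar j (by rw [Fin.lt_def]; omega)
    rw [hj] at hge
    exact absurd hlt (not_lt.mpr hge)
  refine ⟨hmain, ?_⟩
  obtain ⟨i, hi3, hgood⟩ := hmain
  have h1 : select (l.get i) ≤ select.toOuterMeasure {x | isGood f P x} := by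
    rw [PMF.toOuterMeasure_apply]
    have hle := ENNReal.le_tsum (f := fun x => Set.indicator {x | isGood f P x} (⇑select) x)
      (l.get i)
    have hmemS : l.get i ∈ {x | isGood f P x} := hgood
    have heq : {x | isGood f P x}.indicator (⇑select) (l.get i) = select (l.get i) :=
      Set.indicator_of_mem hmemS _
    rw [heq] at hle
    exact hle
  rw [hsel i] at h1
  refine le_trans ?_ h1
  have hcase : (i : ℕ) = 0 ∨ (i : ℕ) = 1 ∨ (i : ℕ) = 2 := by omega
  rcases hcase with h | h | h <;> rw [h]
  · exact min_le_left _ _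
  · exact le_trans (min_le_right _ _) (min_le_left _ _)
  · exact le_trans (min_le_right _ _) (min_le_right _ _)


end EMO
end
end

section
/- Under the power-law ranking scheme over a population of size μ ≥ 3, the selection probability of the third-ranked individual satisfies r₃ = (1/3²) / (∑_{j=1}^{μ} 1/j²) ≥ 2/(3π²); consequently, whenever among the top three ranked individuals there is a good individual, the probability of selecting a good individual is at least 2/(3π²), a constant independent of μ. -/
noncomputable section
open scoped ENNReal
attribute [local instance] Classical.propDecidable

namespace EMO


/-- Under the power-law ranking scheme (μ ≥ 3), the third-ranked
individual is selected with probability `(1/3²) / ∑_{j=1}^μ 1/j² ≥ 2/(3π²)`; hence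
whenever a good individual is among the top three ranks, a good individual is selected
with probability at least `2/(3π²)`, a constant independent of μ. -/
theorem powerlaw_scheme_constant (μ : ℕ) (hμ : 3 ≤ μ) :
    ((2 / (3 * Real.pi ^ 2) : ℝ) ≤
        (1 / (3 : ℝ) ^ 2) / ∑ j ∈ Finset.Icc 1 μ, 1 / (j : ℝ) ^ 2) ∧
    ∀ G : Finset ℕ, G ⊆ Finset.Icc 1 μ → (∃ i ∈ G, i ≤ 3) →
      (2 / (3 * Real.pi ^ 2) : ℝ) ≤
        ∑ i ∈ G, (1 / (i : ℝ) ^ 2) / ∑ j ∈ Finset.Icc 1 μ, 1 / (j : ℝ) ^ 2 := by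
  set S : ℝ := ∑ j ∈ Finset.Icc 1 μ, 1 / (j : ℝ) ^ 2 with hS
  have hSle : S ≤ Real.pi ^ 2 / 6 :=
    sum_le_hasSum _ (fun i _ => by positivity) hasSum_zeta_two
  have hSpos : 0 < S := by
    refine Finset.sum_pos (fun j hj => ?_) ⟨1, by simp [Finset.mem_Icc]; omega⟩
    have : (1:ℕ) ≤ j := (Finset.mem_Icc.mp hj).1
    positivity
  have hpi : (0:ℝ) < Real.pi ^ 2 := by positivity
  have key : (2 / (3 * Real.pi ^ 2) : ℝ) ≤ (1 / (3 : ℝ) ^ 2) / S := by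
    rw [div_le_div_iff₀ (by positivity) hSpos]
    nlinarith
  refine ⟨key, fun G hG ⟨i, hiG, hi3⟩ => ?_⟩
  have hi1 : 1 ≤ i := (Finset.mem_Icc.mp (hG hiG)).1
  have hi1' : (1:ℝ) ≤ (i:ℝ) := by exact_mod_cast hi1
  have hi3' : ((i:ℝ)) ≤ 3 := by exact_mod_cast hi3
  have h1 : (1 / (3 : ℝ) ^ 2) / S ≤ (1 / (i : ℝ) ^ 2) / S := by
    gcongr
  refine key.trans (h1.trans ?_)
  exact Finset.single_le_sum (f := fun j : ℕ => 1 / (j:ℝ)^2 / S) (fun j _ => by positivity) hiG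

end EMO
end
end
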